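/- Let a and b be coprime positive integers and define f(n) = n/(ab) - {b⁻¹n/a} - {a⁻¹n/b} + 1 for n ∈ ℤ, where b⁻¹b ≡ 1 (mod a) and a⁻¹a ≡ 1 (mod b). Then f(n) > 0 for every integer n ≥ ab - a - b + 1, and f(ab - a - b) = 0. -/

import Mathlib

lemma fract_int_div_nat (x : ℤ) (a : ℕ) :
    Int.fract ((x : ℝ) / (a : ℝ)) = ((x % (a : ℤ) : ℤ) : ℝ) / (a : ℝ) :=
  Int.fract_div_intCast_eq_div_intCast_mod

/-- Popoviciu's formula combined with the Frobenius number: the function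
`f(N) = N/(ab) - {b⁻¹N/a} - {a⁻¹N/b} + 1` is positive for all
`N ≥ ab - a - b + 1`, and vanishes at `N = ab - a - b`. -/
theorem popoviciu_function_frobenius (a b : ℕ) (ha : 0 < a) (hb : 0 < b)
    (hab : Nat.Coprime a b) (binv ainv : ℤ)
    (hbinv : binv * (b : ℤ) ≡ 1 [ZMOD (a : ℤ)])
    (hainv : ainv * (a : ℤ) ≡ 1 [ZMOD (b : ℤ)]) :
    (∀ N : ℤ, (a : ℤ) * b - a - b + 1 ≤ N →
      0 < (N : ℝ) / ((a : ℝ) * b)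
          - Int.fract (((binv * N : ℤ) : ℝ) / (a : ℝ))
          - Int.fract (((ainv * N : ℤ) : ℝ) / (b : ℝ)) + 1) ∧
    ((((a : ℤ) * b - a - b : ℤ) : ℝ) / ((a : ℝ) * b)
        - Int.fract (((binv * ((a : ℤ) * b - a - b) : ℤ) : ℝ) / (a : ℝ))
        - Int.fract (((ainv * ((a : ℤ) * b - a - b) : ℤ) : ℝ) / (b : ℝ)) + 1 = 0) := by
  have haZ : (0 : ℤ) < (a : ℤ) := by exact_mod_cast ha
  have hbZ : (0 : ℤ) < (b : ℤ) := by exact_mod_cast hb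
  have haR : (0 : ℝ) < (a : ℝ) := by exact_mod_cast ha
  have hbR : (0 : ℝ) < (b : ℝ) := by exact_mod_cast hb
  -- general rewriting: for any N, the expression equals
  -- (N - b * rA - a * rB + a*b) / (a*b) where rA, rB are the emods
  have key : ∀ N : ℤ,
      (N : ℝ) / ((a : ℝ) * b)
        - Int.fract (((binv * N : ℤ) : ℝ) / (a : ℝ))
        - Int.fract (((ainv * N : ℤ) : ℝ) / (b : ℝ)) + 1
      = ((N - (b : ℤ) * ((binv * N) % (a : ℤ)) - (a : ℤ) * ((ainv * N) % (b : ℤ))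
          + (a : ℤ) * b : ℤ) : ℝ) / ((a : ℝ) * b) := by
    intro N
    rw [fract_int_div_nat, fract_int_div_nat]
    push_cast
    field_simp
  constructor
  · intro N hN
    rw [key]
    apply div_pos
    · have h1 : (binv * N) % (a : ℤ) ≤ (a : ℤ) - 1 := by
        have := Int.emod_lt_of_pos (binv * N) haZ; omega
      have h2 : (ainv * N) % (b : ℤ) ≤ (b : ℤ) - 1 := by
        have := Int.emod_lt_of_pos (ainv * N) hbZ; omega
      have : (0 : ℤ) < N - (b : ℤ) * ((binv * N) % (a : ℤ))
          - (a : ℤ) * ((ainv * N) % (b : ℤ)) + (a : ℤ) * b := by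
        nlinarith
      exact_mod_cast this
    · positivity
  · rw [key]
    set N₀ : ℤ := (a : ℤ) * b - a - b with hN₀
    have hrA : (binv * N₀) % (a : ℤ) = (a : ℤ) - 1 := by
      have hmod : binv * N₀ ≡ (a : ℤ) - 1 [ZMOD (a : ℤ)] := by
        calc binv * N₀ = (binv * b) * (-1) + (binv * b - binv) * a := by ring
          _ ≡ 1 * (-1) + (binv * b - binv) * a [ZMOD (a : ℤ)] :=
              Int.ModEq.add_right _ (hbinv.mul_right _)
          _ ≡ (a : ℤ) - 1 [ZMOD (a : ℤ)] :=
              Int.modEq_iff_dvd.mpr ⟨1 - (binv * b - binv), by ring⟩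
      have : _ % _ = _ % _ := hmod
      rw [Int.emod_eq_of_lt (a := (a:ℤ) - 1) (by omega) (by omega)] at this
      omega
    have hrB : (ainv * N₀) % (b : ℤ) = (b : ℤ) - 1 := by
      have hmod : ainv * N₀ ≡ (b : ℤ) - 1 [ZMOD (b : ℤ)] := by
        calc ainv * N₀ = (ainv * a) * (-1) + (ainv * a - ainv) * b := by ring
          _ ≡ 1 * (-1) + (ainv * a - ainv) * b [ZMOD (b : ℤ)] :=
              Int.ModEq.add_right _ (hainv.mul_right _)
          _ ≡ (b : ℤ) - 1 [ZMOD (b : ℤ)] :=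
              Int.modEq_iff_dvd.mpr ⟨1 - (ainv * a - ainv), by ring⟩
      have : _ % _ = _ % _ := hmod
      rw [Int.emod_eq_of_lt (a := (b:ℤ) - 1) (by omega) (by omega)] at this
      omega
    rw [hrA, hrB]
    have : N₀ - (b : ℤ) * ((a : ℤ) - 1) - (a : ℤ) * ((b : ℤ) - 1) + (a : ℤ) * b = 0 := by
      rw [hN₀]; ring
    rw [this]
    simp
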